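/- Let D be an r×c matrix over an abelian group G of order s in which, for all pairs of distinct rows, the entrywise difference of the rows contains each element of G exactly c/s times (a difference scheme D(r,c,s)). Then r ≤ c. -/

import Mathlib

open Finset Classical

lemma char_sum_aux {G : Type*} [AddCommGroup G] [Fintype G] {c : ℕ}
    (ψ : AddChar G ℂ) (e : Fin c → G) :
    ∑ k, ψ (e k) = ∑ g : G, ((Finset.univ.filter (fun k => e k = g)).card : ℂ) * ψ g := by
  rw [← Finset.sum_fiberwise Finset.univ e (fun k => ψ (e k))]
  refine Finset.sum_congr rfl fun g _ => ?_
  rw [Finset.sum_congr rfl (fun k hk => by rw [(Finset.mem_filter.1 hk).2])]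
  simp [mul_comm]

/-- Jungnickel's bound: if D is an r×c difference scheme over a finite
abelian group G of order s ≥ 2 — every entrywise difference of two distinct rows contains
each element of G exactly c/s times — then r ≤ c. -/
theorem difference_scheme_row_bound
    {G : Type*} [AddCommGroup G] [Fintype G]
    (s : ℕ) (hs : Fintype.card G = s) (hs2 : 2 ≤ s)
    (r c : ℕ) (hc : 0 < c)
    (D : Fin r → Fin c → G)
    (hD : ∀ μ ν : Fin r, μ ≠ ν → ∀ g : G,
        s * (Finset.univ.filter (fun k => D μ k - D ν k = g)).card = c) :
    r ≤ c := by
  -- there is a nonzero element of G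
  have hnt : Nontrivial G := by
    apply Fintype.one_lt_card_iff_nontrivial.1; omega
  obtain ⟨a, ha⟩ := exists_ne (0 : G)
  -- get a nontrivial additive character
  obtain ⟨ψ, hψ⟩ := (AddChar.exists_apply_ne_zero (a := a)).2 ha
  have hψ0 : ψ ≠ 0 := by
    rintro rfl; exact hψ rfl
  have hsum : ∑ g : G, ψ g = 0 := AddChar.sum_eq_zero_iff_ne_zero.2 hψ0
  -- key orthogonality
  have key : ∀ μ ν : Fin r, μ ≠ ν → ∑ k, ψ (D μ k - D ν k) = 0 := by
    intro μ ν hμν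
    have h1 : (s : ℂ) * ∑ k, ψ (D μ k - D ν k) = 0 := by
      rw [char_sum_aux, Finset.mul_sum]
      calc ∑ g : G, (s : ℂ) * (((Finset.univ.filter (fun k => D μ k - D ν k = g)).card : ℂ) * ψ g)
          = ∑ g : G, (c : ℂ) * ψ g := by
            refine Finset.sum_congr rfl fun g _ => ?_
            rw [← mul_assoc, ← Nat.cast_mul, hD μ ν hμν g]
        _ = 0 := by rw [← Finset.mul_sum, hsum, mul_zero]
    exact (mul_eq_zero.1 h1).resolve_left (by exact_mod_cast (by omega : s ≠ 0))
  -- the normalized rows form an orthonormal family in ℂ^c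
  set v : Fin r → EuclideanSpace ℂ (Fin c) :=
    fun μ => WithLp.toLp 2 (fun k => ((Real.sqrt c : ℂ))⁻¹ * ψ (D μ k)) with hv
  have hortho : Orthonormal ℂ v := by
    rw [orthonormal_iff_ite]
    intro μ ν
    have hinner : (inner ℂ (v μ) (v ν) : ℂ) =
        ((Real.sqrt c : ℂ))⁻¹ * ((Real.sqrt c : ℂ))⁻¹ * ∑ k, ψ (D ν k - D μ k) := by
      rw [PiLp.inner_apply, Finset.mul_sum]
      refine Finset.sum_congr rfl fun k _ => ?_
      simp only [hv, PiLp.toLp_apply, RCLike.inner_apply, map_mul, map_inv₀]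
      rw [Complex.conj_ofReal, ← AddChar.map_neg_eq_conj, sub_eq_add_neg,
        AddChar.map_add_eq_mul]
      ring
    by_cases h : μ = ν
    · subst h
      rw [if_pos rfl, hinner]
      simp only [sub_self, AddChar.map_zero_eq_one, Finset.sum_const, Finset.card_univ,
        Fintype.card_fin, nsmul_eq_mul, mul_one]
      have hcr : (0:ℝ) < Real.sqrt c := Real.sqrt_pos.2 (by exact_mod_cast hc)
      have hmul : ((Real.sqrt c : ℝ) : ℂ) * ((Real.sqrt c : ℝ) : ℂ) = (c : ℂ) := by
        rw [← Complex.ofReal_mul, Real.mul_self_sqrt (by positivity)]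
        norm_num
      have hne : ((Real.sqrt c : ℝ) : ℂ) ≠ 0 := by
        exact_mod_cast hcr.ne'
      field_simp
      rw [sq]; exact hmul.symm
    · rw [if_neg h, hinner, key ν μ (Ne.symm h), mul_zero]
  have hli := hortho.linearIndependent
  have hcard := hli.fintype_card_le_finrank
  simpa [finrank_euclideanSpace_fin] using hcard
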